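/- arXiv:1606.01512 — 2 statements merged into one kernel-verified Lean document; each statement's English description precedes it below -/
import Mathlib

section
/- For every t ≠ 0, every Schwartz function f : ℝ^d → ℂ, and every x ∈ ℝ^d, one has the kernel representation (e^{itΔ}f)(x) = (4πit)^{−d/2} ∫_{ℝ^d} e^{i|x−y|²/(4t)} f(y) dy, where (4πit)^{−d/2} := (4π|t|)^{−d/2} e^{−i·sgn(t)·dπ/4} is the principal branch value. -/
open MeasureTheory

noncomputable section

/-- The Fourier transform `𝓕f(ξ) = (2π)^{-d/2} ∫ e^{-ix·ξ} f(x) dx`. -/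
def fourierT {d : ℕ} (f : EuclideanSpace ℝ (Fin d) → ℂ) (ξ : EuclideanSpace ℝ (Fin d)) : ℂ :=
  (((2 * Real.pi) ^ (-(d : ℝ) / 2) : ℝ) : ℂ) *
    ∫ x : EuclideanSpace ℝ (Fin d), Complex.exp (-Complex.I * ((inner ℝ x ξ : ℝ) : ℂ)) * f x

/-- The inverse Fourier transform `𝓕⁻¹g(x) = (2π)^{-d/2} ∫ e^{ix·ξ} g(ξ) dξ`. -/
def invFourierT {d : ℕ} (g : EuclideanSpace ℝ (Fin d) → ℂ) (x : EuclideanSpace ℝ (Fin d)) : ℂ :=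
  (((2 * Real.pi) ^ (-(d : ℝ) / 2) : ℝ) : ℂ) *
    ∫ ξ : EuclideanSpace ℝ (Fin d), Complex.exp (Complex.I * ((inner ℝ x ξ : ℝ) : ℂ)) * g ξ

/-- The free Schrödinger propagator `e^{itΔ}f = 𝓕⁻¹(e^{-it|ξ|²} 𝓕f)`. -/
def schrodingerProp {d : ℕ} (t : ℝ) (f : EuclideanSpace ℝ (Fin d) → ℂ) :
    EuclideanSpace ℝ (Fin d) → ℂ :=
  invFourierT (fun ξ => Complex.exp (-Complex.I * (t : ℂ) * ((‖ξ‖ ^ 2 : ℝ) : ℂ)) * fourierT f ξ)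

open Complex Filter Real
open scoped RealInnerProductSpace Topology FourierTransform SchwartzMap

/-- `π/(it) = (-π/t)·i`. -/
lemma pi_div_I_mul {t : ℝ} (ht : t ≠ 0) :
    (Real.pi:ℂ)/(Complex.I*(t:ℂ)) = ((-Real.pi/t : ℝ):ℂ) * Complex.I := by
  have htc : (t:ℂ) ≠ 0 := by exact_mod_cast ht
  have h0 : Complex.I * (t:ℂ) ≠ 0 := by simp [Complex.I_ne_zero, ht]
  rw [div_eq_iff h0,
    show ((-Real.pi/t : ℝ):ℂ) * Complex.I * (Complex.I * (t:ℂ))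
      = ((-Real.pi/t : ℝ):ℂ) * (t:ℂ) * (Complex.I*Complex.I) by ring, Complex.I_mul_I]
  push_cast
  field_simp

lemma auxB (d : ℕ) {t : ℝ} (ht : t ≠ 0) :
    (((2*Real.pi)^(-(d:ℝ)/2):ℝ):ℂ) * ((((2*Real.pi)^(-(d:ℝ)/2):ℝ):ℂ) *
      ((Real.pi:ℂ)/(Complex.I*(t:ℂ)))^((d:ℂ)/2)) =
    (((4*Real.pi*|t|)^(-(d:ℝ)/2):ℝ):ℂ) *
      Complex.exp (-Complex.I * (Real.sign t : ℂ) * (d:ℂ) * (Real.pi:ℂ)/4) := by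
  have hπ := Real.pi_pos
  have hat : (0:ℝ) < |t| := abs_pos.mpr ht
  have htc : (t:ℂ) ≠ 0 := by exact_mod_cast ht
  have h0 : Complex.I * (t:ℂ) ≠ 0 := by simp [Complex.I_ne_zero, ht]
  set z : ℂ := (Real.pi:ℂ)/(Complex.I*(t:ℂ)) with hz
  have hz' : z = ((-Real.pi/t : ℝ):ℂ) * Complex.I := pi_div_I_mul ht
  have hzne : z ≠ 0 := by
    rw [hz']
    simp [Complex.I_ne_zero, div_eq_zero_iff, Real.pi_ne_zero, ht]
  have habs : ‖z‖ = Real.pi / |t| := by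
    rw [hz']
    simp [abs_div, abs_of_pos hπ]
  have harg : Complex.arg z = -(Real.sign t) * (Real.pi/2) := by
    rcases ht.lt_or_gt with h | h
    · have hpos : (0:ℝ) < -Real.pi/t := div_pos_of_neg_of_neg (by linarith) h
      rw [hz', show (((-Real.pi/t:ℝ)):ℂ) * Complex.I = ((-Real.pi/t:ℝ)) * Complex.I from rfl,
        Complex.arg_real_mul _ hpos, Complex.arg_I, Real.sign_of_neg h]
      ring
    · have : z = ((Real.pi/t : ℝ):ℂ) * (-Complex.I) := by rw [hz']; push_cast; ring
      rw [this, Complex.arg_real_mul _ (div_pos hπ h), Complex.arg_neg_I, Real.sign_of_pos h]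
      ring
  have hlog : Complex.log z = (Real.log (Real.pi/|t|) : ℂ) + ((-(Real.sign t) * (Real.pi/2) : ℝ) : ℂ) * Complex.I := by
    rw [Complex.log, habs, harg]
  have hcpow : z ^ ((d:ℂ)/2) =
      (((Real.pi/|t|) ^ ((d:ℝ)/2) : ℝ) : ℂ) *
        Complex.exp (-Complex.I * (Real.sign t : ℂ) * (d:ℂ) * (Real.pi:ℂ)/4) := by
    rw [Complex.cpow_def_of_ne_zero hzne, hlog, add_mul, Complex.exp_add]
    congr 1
    · rw [show (Real.log (Real.pi/|t|) : ℂ) * ((d:ℂ)/2) = ((Real.log (Real.pi/|t|) * ((d:ℝ)/2) : ℝ) : ℂ) by push_cast; ring,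
        ← Complex.ofReal_exp, Real.rpow_def_of_pos (div_pos hπ hat)]
    · congr 1
      push_cast
      ring
  rw [hcpow]
  have h2 : ((|t|/Real.pi))^(-(d:ℝ)/2) = (Real.pi/|t|)^((d:ℝ)/2) := by
    rw [show Real.pi/|t| = (|t|/Real.pi)⁻¹ by rw [inv_div], Real.inv_rpow (by positivity),
      ← Real.rpow_neg (by positivity)]
    ring_nf
  have h1 : (4*Real.pi*|t|)^(-(d:ℝ)/2)
      = ((2*Real.pi)^(-(d:ℝ)/2) * (2*Real.pi)^(-(d:ℝ)/2)) * (Real.pi/|t|)^((d:ℝ)/2) := by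
    rw [← Real.rpow_add (by positivity), ← h2,
      show -(d:ℝ)/2 + -(d:ℝ)/2 = 2 * (-(d:ℝ)/2) by ring,
      Real.rpow_mul (by positivity : (0:ℝ) ≤ 2*Real.pi), Real.rpow_two,
      ← Real.mul_rpow (by positivity) (by positivity)]
    congr 1
    field_simp
    ring
  rw [h1]
  push_cast
  ring

lemma fourierT_eq {d : ℕ} (f : 𝓢(EuclideanSpace ℝ (Fin d), ℂ)) (ξ : EuclideanSpace ℝ (Fin d)) :
    fourierT ⇑f ξ = (((2 * Real.pi) ^ (-(d : ℝ) / 2) : ℝ) : ℂ) *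
      𝓕 (⇑f : EuclideanSpace ℝ (Fin d) → ℂ) ((2*Real.pi)⁻¹ • ξ) := by
  rw [fourierT, Real.fourier_eq']
  congr 1
  refine integral_congr_ae (Filter.Eventually.of_forall fun v => ?_)
  simp only [smul_eq_mul]
  congr 1
  rw [real_inner_smul_right]
  push_cast
  have h2 : (2*(Real.pi:ℂ)) ≠ 0 := by
    simp [Real.pi_ne_zero]
  field_simp

lemma fourierT_integrable {d : ℕ} (f : 𝓢(EuclideanSpace ℝ (Fin d), ℂ)) :
    Integrable (fourierT ⇑f) := by
  have h1 : Integrable (𝓕 ⇑f) := by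
    rw [← SchwartzMap.fourier_coe, ← SchwartzMap.fourierTransformCLM_apply (𝕜 := ℂ) f]
    exact (SchwartzMap.fourierTransformCLM ℂ f).integrable
  have h2 := h1.comp_smul (R := (2*Real.pi)⁻¹) (by positivity)
  exact (h2.const_mul _).congr (Filter.Eventually.of_forall fun ξ => (fourierT_eq f ξ).symm)

lemma fourierT_continuous {d : ℕ} (f : 𝓢(EuclideanSpace ℝ (Fin d), ℂ)) :
    Continuous (fourierT ⇑f) := by
  have h1 : Continuous (𝓕 ⇑f) := by
    rw [← SchwartzMap.fourier_coe, ← SchwartzMap.fourierTransformCLM_apply (𝕜 := ℂ) f]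
    exact (SchwartzMap.fourierTransformCLM ℂ f).continuous
  have : Continuous fun ξ : EuclideanSpace ℝ (Fin d) => 𝓕 ⇑f ((2*Real.pi)⁻¹ • ξ) :=
    h1.comp (continuous_const_smul _)
  exact ((continuous_const.mul this).congr fun ξ => (fourierT_eq f ξ).symm)

/-- Kernel representation of the free Schrödinger propagator:
`(e^{itΔ}f)(x) = (4πit)^{-d/2} ∫ e^{i|x-y|²/(4t)} f(y) dy`, with the principal branch
`(4πit)^{-d/2} = (4π|t|)^{-d/2} e^{-i·sgn(t)·dπ/4}`. -/
theorem schrodingerProp_kernel_repr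
    (d : ℕ) (t : ℝ) (ht : t ≠ 0) (f : SchwartzMap (EuclideanSpace ℝ (Fin d)) ℂ)
    (x : EuclideanSpace ℝ (Fin d)) :
    schrodingerProp t (⇑f) x
      = (((4 * Real.pi * |t|) ^ (-(d : ℝ) / 2) : ℝ) : ℂ) *
          Complex.exp (-Complex.I * (Real.sign t : ℂ) * (d : ℂ) * (Real.pi : ℂ) / 4) *
          ∫ y : EuclideanSpace ℝ (Fin d),
            Complex.exp (Complex.I * ((‖x - y‖ ^ 2 : ℝ) : ℂ) / (4 * (t : ℂ))) * f y := by
  have hπ := Real.pi_pos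
  have htc : (t:ℂ) ≠ 0 := by exact_mod_cast ht
  have hIt : Complex.I * (t:ℂ) ≠ 0 := mul_ne_zero Complex.I_ne_zero htc
  set c : ℝ := (2 * Real.pi) ^ (-(d : ℝ) / 2) with hc
  set b : ℝ → ℂ := fun ε => (ε : ℂ) + Complex.I * (t:ℂ) with hbdef
  have hbre : ∀ ε : ℝ, (b ε).re = ε := by
    intro ε; simp [hbdef]
  have hbne : ∀ ε : ℝ, 0 < ε → 0 < (b ε).re := fun ε hε => by rw [hbre]; exact hε
  have hbI : Tendsto b (𝓝[>] (0:ℝ)) (𝓝 (Complex.I * (t:ℂ))) := by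
    have h : Tendsto (fun ε : ℝ => ((ε:ℂ) + Complex.I * (t:ℂ))) (𝓝 (0:ℝ))
        (𝓝 (((0:ℝ):ℂ) + Complex.I * (t:ℂ))) :=
      (Complex.continuous_ofReal.tendsto _).add tendsto_const_nhds
    simp only [Complex.ofReal_zero, zero_add] at h
    exact h.mono_left nhdsWithin_le_nhds
  have hre : ∀ (B : ℂ) (a r : ℝ), (Complex.I * (a:ℂ) - B * ((r:ℝ):ℂ)).re = -(B.re * r) := by
    intro B a r
    simp [Complex.sub_re, Complex.mul_re]
  have hre2 : ∀ a : ℝ, (-Complex.I * ((a:ℝ):ℂ)).re = 0 := by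
    intro a; simp
  set F : ℝ → ℂ := fun ε =>
    ∫ ξ : EuclideanSpace ℝ (Fin d),
      Complex.exp (Complex.I * ((inner ℝ x ξ : ℝ) : ℂ) - b ε * ((‖ξ‖^2 : ℝ) : ℂ)) * fourierT (⇑f) ξ
    with hF
  set Gt : ℂ := ∫ y : EuclideanSpace ℝ (Fin d),
      Complex.exp (Complex.I * ((‖x - y‖ ^ 2 : ℝ) : ℂ) / (4 * (t : ℂ))) * f y with hGt
  set G : ℂ → ℂ := fun B => ∫ y : EuclideanSpace ℝ (Fin d),
      Complex.exp (-((‖x - y‖ ^ 2 : ℝ) : ℂ) / (4 * B)) * f y with hG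
  have hmeas : ∀ B : ℂ, Continuous fun ξ : EuclideanSpace ℝ (Fin d) =>
      Complex.exp (Complex.I * ((inner ℝ x ξ : ℝ) : ℂ) - B * ((‖ξ‖^2 : ℝ) : ℂ)) * fourierT (⇑f) ξ := by
    intro B
    refine (Complex.continuous_exp.comp (Continuous.sub ?_ ?_)).mul (fourierT_continuous f)
    · exact continuous_const.mul (Complex.continuous_ofReal.comp
        (Continuous.inner continuous_const continuous_id))
    · exact continuous_const.mul (Complex.continuous_ofReal.comp (continuous_norm.pow 2))
  -- Step A : dominated convergence in the ξ-integral
  have stepA : Tendsto F (𝓝[>] (0:ℝ))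
      (𝓝 (∫ ξ : EuclideanSpace ℝ (Fin d),
        Complex.exp (Complex.I * ((inner ℝ x ξ : ℝ) : ℂ) - Complex.I * (t:ℂ) * ((‖ξ‖^2 : ℝ) : ℂ))
          * fourierT (⇑f) ξ)) := by
    refine tendsto_integral_filter_of_dominated_convergence (fun ξ => ‖fourierT (⇑f) ξ‖)
      (Filter.Eventually.of_forall fun ε => (hmeas (b ε)).aestronglyMeasurable)
      ?_ (fourierT_integrable f).norm ?_
    · filter_upwards [self_mem_nhdsWithin] with ε hε
      refine Filter.Eventually.of_forall fun ξ => ?_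
      rw [norm_mul, Complex.norm_exp, hre]
      have h1 : Real.exp (-((b ε).re * ‖ξ‖^2)) ≤ 1 := by
        rw [Real.exp_le_one_iff, hbre]
        have : (0:ℝ) < ε := hε
        nlinarith [sq_nonneg ‖ξ‖]
      calc Real.exp (-((b ε).re * ‖ξ‖^2)) * ‖fourierT (⇑f) ξ‖
          ≤ 1 * ‖fourierT (⇑f) ξ‖ := mul_le_mul_of_nonneg_right h1 (norm_nonneg _)
        _ = ‖fourierT (⇑f) ξ‖ := one_mul _
    · refine Filter.Eventually.of_forall fun ξ => ?_
      have hc2 : Tendsto (fun ε => Complex.I * ((inner ℝ x ξ : ℝ) : ℂ) - b ε * ((‖ξ‖^2 : ℝ) : ℂ))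
          (𝓝[>] (0:ℝ)) (𝓝 (Complex.I * ((inner ℝ x ξ : ℝ) : ℂ) - Complex.I * (t:ℂ) * ((‖ξ‖^2 : ℝ) : ℂ))) :=
        tendsto_const_nhds.sub (hbI.mul tendsto_const_nhds)
      exact ((Complex.continuous_exp.tendsto _).comp hc2).mul tendsto_const_nhds
  -- Step B : Fubini + Gaussian integral, for each ε > 0
  have stepB : ∀ ε : ℝ, 0 < ε →
      F ε = (c:ℂ) * (((Real.pi:ℂ) / (b ε)) ^ ((d:ℂ)/2) * G (b ε)) := by
    intro ε hε
    have hB : 0 < (b ε).re := hbne ε hε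
    have hΦ : Integrable (Function.uncurry fun (ξ y : EuclideanSpace ℝ (Fin d)) =>
        Complex.exp (Complex.I * ((inner ℝ x ξ : ℝ) : ℂ) - b ε * ((‖ξ‖^2 : ℝ) : ℂ)) *
          (Complex.exp (-Complex.I * ((inner ℝ y ξ : ℝ) : ℂ)) * f y)) (volume.prod volume) := by
      have hexp : Integrable (fun ξ : EuclideanSpace ℝ (Fin d) => Real.exp (-(ε * ‖ξ‖^2))) := by
        have h := (GaussianFourier.integrable_cexp_neg_mul_sq_norm_add
          (V := EuclideanSpace ℝ (Fin d)) (b := (ε:ℂ)) (by simpa using hε) 0 0).norm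
        refine h.congr (Filter.Eventually.of_forall fun ξ => ?_)
        have h9 : (-(ε:ℂ) * (‖ξ‖:ℂ)^2 + 0 * ((inner ℝ (0 : EuclideanSpace ℝ (Fin d)) ξ : ℝ):ℂ))
            = ((-(ε * ‖ξ‖^2) : ℝ) : ℂ) := by push_cast; ring
        simp only [Complex.norm_exp]
        rw [h9, Complex.ofReal_re]
      have hg : Integrable (fun p : EuclideanSpace ℝ (Fin d) × EuclideanSpace ℝ (Fin d) =>
          Real.exp (-(ε * ‖p.1‖^2)) * ‖f p.2‖) (volume.prod volume) :=
        hexp.mul_prod f.integrable.norm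
      refine hg.mono' (Continuous.aestronglyMeasurable ?_) ?_
      · refine ((Complex.continuous_exp.comp (Continuous.sub ?_ ?_)).mul
          ((Complex.continuous_exp.comp ?_).mul (f.continuous.comp continuous_snd)))
        · exact continuous_const.mul (Complex.continuous_ofReal.comp
            (Continuous.inner continuous_const continuous_fst))
        · exact continuous_const.mul (Complex.continuous_ofReal.comp
            ((continuous_norm.comp continuous_fst).pow 2))
        · exact continuous_const.mul (Complex.continuous_ofReal.comp
            (Continuous.inner continuous_snd continuous_fst))
      · refine Filter.Eventually.of_forall fun p => ?_
        rw [Function.uncurry]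
        rw [norm_mul, norm_mul,
          Complex.norm_exp, Complex.norm_exp, hre, hre2, Real.exp_zero, one_mul, hbre]
    have e1 : F ε = (c:ℂ) * ∫ ξ : EuclideanSpace ℝ (Fin d),
        ∫ y : EuclideanSpace ℝ (Fin d),
          Complex.exp (Complex.I * ((inner ℝ x ξ : ℝ) : ℂ) - b ε * ((‖ξ‖^2 : ℝ) : ℂ)) *
            (Complex.exp (-Complex.I * ((inner ℝ y ξ : ℝ) : ℂ)) * f y) := by
      rw [hF, ← integral_const_mul]
      refine integral_congr_ae (Filter.Eventually.of_forall fun ξ => ?_)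
      simp only [fourierT]
      rw [integral_const_mul]
      ring
    have e2 := integral_integral_swap hΦ
    have e3 : ∀ y : EuclideanSpace ℝ (Fin d),
        (∫ ξ : EuclideanSpace ℝ (Fin d),
          Complex.exp (Complex.I * ((inner ℝ x ξ : ℝ) : ℂ) - b ε * ((‖ξ‖^2 : ℝ) : ℂ)) *
            (Complex.exp (-Complex.I * ((inner ℝ y ξ : ℝ) : ℂ)) * f y))
        = ((Real.pi:ℂ)/(b ε))^((d:ℂ)/2) *
            (Complex.exp (-((‖x - y‖ ^ 2 : ℝ) : ℂ) / (4 * b ε)) * f y) := by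
      intro y
      have e4 : ∀ ξ : EuclideanSpace ℝ (Fin d),
          Complex.exp (Complex.I * ((inner ℝ x ξ : ℝ) : ℂ) - b ε * ((‖ξ‖^2 : ℝ) : ℂ)) *
            (Complex.exp (-Complex.I * ((inner ℝ y ξ : ℝ) : ℂ)) * f y)
          = Complex.exp (-(b ε) * (‖ξ‖:ℂ)^2 + Complex.I * ((inner ℝ (x - y) ξ : ℝ):ℂ)) * f y := by
        intro ξ
        rw [← mul_assoc, ← Complex.exp_add]
        congr 2
        rw [inner_sub_left]
        push_cast
        ring
      simp_rw [e4]
      rw [integral_mul_const, GaussianFourier.integral_cexp_neg_mul_sq_norm_add hB Complex.I (x - y),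
        Complex.I_sq, finrank_euclideanSpace_fin, mul_assoc]
      congr 3
      push_cast
      ring
    rw [e1, e2]
    simp_rw [e3]
    rw [integral_const_mul]
  -- Step C : limit of the right-hand side
  have hGlim : Tendsto (fun ε => G (b ε)) (𝓝[>] (0:ℝ)) (𝓝 Gt) := by
    rw [hG, hGt]
    refine tendsto_integral_filter_of_dominated_convergence (fun y => ‖f y‖)
      ?_ ?_ f.integrable.norm ?_
    · refine Filter.Eventually.of_forall fun ε => Continuous.aestronglyMeasurable ?_
      refine (Complex.continuous_exp.comp (Continuous.div_const ?_ _)).mul f.continuous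
      exact (Complex.continuous_ofReal.comp ((continuous_const.sub continuous_id).norm.pow 2)).neg
    · filter_upwards [self_mem_nhdsWithin] with ε hε
      have hε' : (0:ℝ) < ε := hε
      refine Filter.Eventually.of_forall fun y => ?_
      rw [norm_mul, Complex.norm_exp]
      have h1 : (-((‖x - y‖ ^ 2 : ℝ) : ℂ) / (4 * b ε)).re ≤ 0 := by
        rw [div_eq_mul_inv, ← Complex.ofReal_neg, Complex.re_ofReal_mul]
        have h2 : (0:ℝ) ≤ ((4 * b ε)⁻¹).re := by
          rw [Complex.inv_re]
          apply div_nonneg _ (Complex.normSq_nonneg _)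
          have : (4 * b ε).re = 4 * ε := by
            simp [hbdef, Complex.mul_re]
          rw [this]
          linarith
        nlinarith [sq_nonneg ‖x - y‖]
      calc Real.exp ((-((‖x - y‖ ^ 2 : ℝ) : ℂ) / (4 * b ε)).re) * ‖(f : EuclideanSpace ℝ (Fin d) → ℂ) y‖
          ≤ 1 * ‖(f : EuclideanSpace ℝ (Fin d) → ℂ) y‖ :=
            mul_le_mul_of_nonneg_right (Real.exp_le_one_iff.mpr h1) (norm_nonneg _)
        _ = _ := one_mul _
    · refine Filter.Eventually.of_forall fun y => ?_
      have h4 : (4:ℂ) * (Complex.I * (t:ℂ)) ≠ 0 := mul_ne_zero (by norm_num : (4:ℂ) ≠ 0) hIt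
      have harg : Tendsto (fun ε => -((‖x - y‖ ^ 2 : ℝ) : ℂ) / (4 * b ε)) (𝓝[>] (0:ℝ))
          (𝓝 (Complex.I * ((‖x - y‖ ^ 2 : ℝ) : ℂ) / (4 * (t:ℂ)))) := by
        have h5 : Tendsto (fun ε => -((‖x - y‖ ^ 2 : ℝ) : ℂ) / (4 * b ε)) (𝓝[>] (0:ℝ))
            (𝓝 (-((‖x - y‖ ^ 2 : ℝ) : ℂ) / (4 * (Complex.I * (t:ℂ))))) :=
          tendsto_const_nhds.div (tendsto_const_nhds.mul hbI) h4
        have heq : -((‖x - y‖ ^ 2 : ℝ) : ℂ) / (4 * (Complex.I * (t:ℂ)))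
            = Complex.I * ((‖x - y‖ ^ 2 : ℝ) : ℂ) / (4 * (t:ℂ)) := by
          rw [div_eq_div_iff h4 (by simp [htc] : (4:ℂ) * (t:ℂ) ≠ 0)]
          ring_nf
          rw [Complex.I_sq]
          ring
        rwa [heq] at h5
      exact ((Complex.continuous_exp.tendsto _).comp harg).mul tendsto_const_nhds
  have hK : Tendsto (fun ε => ((Real.pi:ℂ)/(b ε))^((d:ℂ)/2)) (𝓝[>] (0:ℝ))
      (𝓝 (((Real.pi:ℂ)/(Complex.I*(t:ℂ)))^((d:ℂ)/2))) := by
    have hdiv : Tendsto (fun ε => (Real.pi:ℂ)/(b ε)) (𝓝[>] (0:ℝ))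
        (𝓝 ((Real.pi:ℂ)/(Complex.I*(t:ℂ)))) := tendsto_const_nhds.div hbI hIt
    have hslit : (Real.pi:ℂ)/(Complex.I*(t:ℂ)) ∈ Complex.slitPlane := by
      rw [pi_div_I_mul ht]
      refine Or.inr ?_
      simp only [Complex.mul_im, Complex.ofReal_re, Complex.I_im, Complex.ofReal_im,
        Complex.I_re, mul_one, mul_zero, add_zero]
      exact div_ne_zero (neg_ne_zero.mpr Real.pi_ne_zero) ht
    exact (continuousAt_cpow_const hslit).tendsto.comp hdiv
  have stepC : Tendsto (fun ε => (c:ℂ) * (((Real.pi:ℂ) / (b ε)) ^ ((d:ℂ)/2) * G (b ε)))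
      (𝓝[>] (0:ℝ))
      (𝓝 ((c:ℂ) * (((Real.pi:ℂ) / (Complex.I * (t:ℂ))) ^ ((d:ℂ)/2) * Gt))) :=
    tendsto_const_nhds.mul (hK.mul hGlim)
  have key : (∫ ξ : EuclideanSpace ℝ (Fin d),
        Complex.exp (Complex.I * ((inner ℝ x ξ : ℝ) : ℂ) - Complex.I * (t:ℂ) * ((‖ξ‖^2 : ℝ) : ℂ))
          * fourierT (⇑f) ξ)
      = (c:ℂ) * (((Real.pi:ℂ) / (Complex.I * (t:ℂ))) ^ ((d:ℂ)/2) * Gt) := by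
    refine tendsto_nhds_unique (stepA.congr' ?_) stepC
    filter_upwards [self_mem_nhdsWithin] with ε hε
    exact stepB ε hε
  have lhs_eq : schrodingerProp t (⇑f) x
      = (c:ℂ) * ∫ ξ : EuclideanSpace ℝ (Fin d),
          Complex.exp (Complex.I * ((inner ℝ x ξ : ℝ) : ℂ) - Complex.I * (t:ℂ) * ((‖ξ‖^2 : ℝ) : ℂ))
            * fourierT (⇑f) ξ := by
    rw [schrodingerProp, invFourierT]
    congr 1
    refine integral_congr_ae (Filter.Eventually.of_forall fun ξ => ?_)
    show Complex.exp (Complex.I * ((inner ℝ x ξ : ℝ):ℂ)) *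
        (Complex.exp (-Complex.I * (t:ℂ) * ((‖ξ‖^2:ℝ):ℂ)) * fourierT (⇑f) ξ)
      = Complex.exp (Complex.I * ((inner ℝ x ξ : ℝ):ℂ) - Complex.I * (t:ℂ) * ((‖ξ‖^2:ℝ):ℂ))
          * fourierT (⇑f) ξ
    rw [← mul_assoc, ← Complex.exp_add]
    congr 2
    ring
  rw [lhs_eq, key]
  have hB2 := auxB d ht
  rw [← hc] at hB2
  linear_combination Gt * hB2

end
end

section
/- Hölder's inequality in Lorentz spaces: let (Ω, μ) be a σ-finite measure space, let 1 ≤ q, q₁, q₂ < ∞ and 1 ≤ α, α₁, α₂ ≤ ∞ satisfy 1/q = 1/q₁ + 1/q₂ and 1/α = 1/α₁ + 1/α₂. Then there exists a constant C = C(q₁, q₂, α₁, α₂) such that for all measurable f, g : Ω → ℂ, ‖fg‖_{L^{q,α}} ≤ C ‖f‖_{L^{q₁,α₁}} ‖g‖_{L^{q₂,α₂}}. -/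
open MeasureTheory ENNReal

noncomputable section

/-- The Lorentz quasinorm `‖f‖_{L^{q,α}}`: the `L^α`-norm, with respect to the measure
`dλ/λ` on `(0,∞)`, of the function `λ ↦ λ · μ({|f| > λ})^{1/q}` (with the supremum
interpretation when `α = ∞`). -/
def lorentzNorm {Ω : Type*} [MeasurableSpace Ω] (μ : Measure Ω) (q : ℝ) (α : ℝ≥0∞)
    (f : Ω → ℂ) : ℝ≥0∞ :=
  if α = ∞ then
    ⨆ lam ∈ Set.Ioi (0 : ℝ),
      ENNReal.ofReal lam * (μ {ω | lam < ‖f ω‖}) ^ (1 / q)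
  else
    (∫⁻ lam in Set.Ioi (0 : ℝ),
        (ENNReal.ofReal lam * (μ {ω | lam < ‖f ω‖}) ^ (1 / q)) ^ α.toReal *
          ENNReal.ofReal (1 / lam)) ^ (1 / α.toReal)

open Set

namespace LorentzHolderAux

/-- The `N` functional. -/
def N (α : ℝ≥0∞) (F : ℝ → ℝ≥0∞) : ℝ≥0∞ :=
  if α = ∞ then ⨆ t ∈ Set.Ioi (0 : ℝ), F t
  else (∫⁻ t in Set.Ioi (0 : ℝ), F t ^ α.toReal * ENNReal.ofReal (1 / t)) ^ (1 / α.toReal)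

def dd {Ω : Type*} [MeasurableSpace Ω] (μ : Measure Ω) (f : Ω → ℂ) : ℝ → ℝ≥0∞ :=
  fun lam => μ {ω | lam < ‖f ω‖}

def rr (D : ℝ → ℝ≥0∞) : ℝ → ℝ≥0∞ :=
  fun t => volume {lam : ℝ | 0 < lam ∧ ENNReal.ofReal t < D lam}

lemma dd_anti {Ω : Type*} [MeasurableSpace Ω] (μ : Measure Ω) (f : Ω → ℂ) :
    Antitone (dd μ f) := fun a b hab =>
  measure_mono fun ω h => lt_of_le_of_lt hab h

lemma rr_anti (D : ℝ → ℝ≥0∞) : Antitone (rr D) := fun a b hab =>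
  measure_mono fun lam h => ⟨h.1, lt_of_le_of_lt (ENNReal.ofReal_le_ofReal hab) h.2⟩

lemma le_rr {D : ℝ → ℝ≥0∞} (hD : Antitone D) {t lam : ℝ} (hlam : 0 < lam)
    (h : ENNReal.ofReal t < D lam) : ENNReal.ofReal lam ≤ rr D t := by
  have hsub : Ioc (0:ℝ) lam ⊆ {x : ℝ | 0 < x ∧ ENNReal.ofReal t < D x} :=
    fun x hx => ⟨hx.1, lt_of_lt_of_le h (hD hx.2)⟩
  calc ENNReal.ofReal lam = volume (Ioc (0:ℝ) lam) := by
        rw [Real.volume_Ioc, sub_zero]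
    _ ≤ rr D t := measure_mono hsub

lemma dd_le_of_gt {D : ℝ → ℝ≥0∞} (hD : Antitone D) {t s : ℝ} (hs : 0 < s)
    (h : rr D t < ENNReal.ofReal s) : D s ≤ ENNReal.ofReal t :=
  le_of_not_gt fun h' => ((le_rr hD hs h').trans_lt h).false

variable {S : Set ℝ}

/-- A downward-closed subset of `(0,∞)` has measure `⨆ a ∈ S, ofReal a`. -/
lemma vol_biSup (hdc : ∀ a ∈ S, Ioc (0:ℝ) a ⊆ S) (h0 : S ⊆ Ioi (0:ℝ)) :
    volume S = ⨆ a ∈ S, ENNReal.ofReal a := by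
  apply le_antisymm
  · set I := ⨆ a ∈ S, ENNReal.ofReal a with hI
    by_cases hItop : I = ∞
    · exact hItop ▸ le_top
    · have hsub : S ⊆ Ioc (0:ℝ) I.toReal := by
        intro x hx
        refine ⟨h0 hx, ?_⟩
        have : ENNReal.ofReal x ≤ I := le_biSup _ hx
        exact (ENNReal.ofReal_le_iff_le_toReal hItop).1 this
      calc volume S ≤ volume (Ioc (0:ℝ) I.toReal) := measure_mono hsub
        _ = ENNReal.ofReal I.toReal := by rw [Real.volume_Ioc, sub_zero]
        _ ≤ I := ENNReal.ofReal_toReal_le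
  · refine iSup₂_le fun a ha => ?_
    calc ENNReal.ofReal a = volume (Ioc (0:ℝ) a) := by rw [Real.volume_Ioc, sub_zero]
      _ ≤ volume S := measure_mono (hdc a ha)

lemma eq_Ioi_of_top (hdc : ∀ a ∈ S, Ioc (0:ℝ) a ⊆ S) (h0 : S ⊆ Ioi (0:ℝ))
    (htop : volume S = ∞) : S = Ioi (0:ℝ) := by
  refine Subset.antisymm h0 fun x hx => ?_
  by_contra hxS
  have hsub : S ⊆ Ioc (0:ℝ) x := by
    intro y hy
    refine ⟨h0 hy, ?_⟩
    by_contra hyx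
    exact hxS (hdc y hy ⟨hx, le_of_not_ge hyx⟩)
  have := (measure_mono hsub).trans_eq (by rw [Real.volume_Ioc, sub_zero])
  rw [htop] at this
  exact (this.trans_lt ENNReal.ofReal_lt_top).false

lemma subset_structure (hdc : ∀ a ∈ S, Ioc (0:ℝ) a ⊆ S) (h0 : S ⊆ Ioi (0:ℝ))
    (hfin : volume S ≠ ∞) :
    Ioo (0:ℝ) (volume S).toReal ⊆ S ∧ S ⊆ Ioc (0:ℝ) (volume S).toReal := by
  constructor
  · intro y hy
    by_contra hyS
    have hsub : S ⊆ Ioc (0:ℝ) y := by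
      intro z hz
      refine ⟨h0 hz, ?_⟩
      by_contra hzy
      exact hyS (hdc z hz ⟨hy.1, le_of_not_ge hzy⟩)
    have h1 : volume S ≤ ENNReal.ofReal y :=
      (measure_mono hsub).trans_eq (by rw [Real.volume_Ioc, sub_zero])
    have h2 : (volume S).toReal ≤ y :=
      ENNReal.toReal_le_of_le_ofReal hy.1.le h1
    exact absurd hy.2 (not_lt.2 h2)
  · intro x hx
    refine ⟨h0 hx, ?_⟩
    have h1 : ENNReal.ofReal x ≤ volume S :=
      le_trans (le_of_eq (by rw [Real.volume_Ioc, sub_zero])) (measure_mono (hdc x hx))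
    exact (ENNReal.ofReal_le_iff_le_toReal hfin).1 h1

/-- a downward-closed set of finite measure is a.e. equal to `Ioo 0 L`. -/
lemma ae_eq_Ioo (hdc : ∀ a ∈ S, Ioc (0:ℝ) a ⊆ S) (h0 : S ⊆ Ioi (0:ℝ))
    (hfin : volume S ≠ ∞) : S =ᵐ[volume] Ioo (0:ℝ) (volume S).toReal := by
  obtain ⟨hlo, hhi⟩ := subset_structure hdc h0 hfin
  have h1 : S \ Ioo (0:ℝ) (volume S).toReal ⊆ {(volume S).toReal} := by
    intro x hx
    obtain ⟨hxS, hxn⟩ := hx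
    have := hhi hxS
    simp only [mem_Ioo, not_and, not_lt] at hxn
    exact le_antisymm this.2 (hxn this.1) ▸ rfl
  have h2 : Ioo (0:ℝ) (volume S).toReal \ S = ∅ := by
    rw [diff_eq_empty]; exact hlo
  refine Filter.eventuallyEq_set.2 ?_
  rw [MeasureTheory.ae_iff]
  refine measure_mono_null (fun x hx => ?_) (?_ : volume ({(volume S).toReal} : Set ℝ) = 0)
  · simp only [mem_setOf_eq] at hx
    by_cases hxS : x ∈ S
    · have : x ∉ Ioo (0:ℝ) (volume S).toReal := fun h => hx (iff_of_true hxS h)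
      exact h1 ⟨hxS, this⟩
    · have hxI : x ∈ Ioo (0:ℝ) (volume S).toReal := by
        by_contra hxI
        exact hx (iff_of_false hxS hxI)
      exact absurd (hlo hxI) hxS
  · exact Real.volume_singleton

lemma lint_Ioo {c : ℝ} (hc : 0 < c) {L : ℝ} (hL : 0 ≤ L) :
    ∫⁻ x in Ioo (0:ℝ) L, ENNReal.ofReal (c * x ^ (c - 1)) = ENNReal.ofReal (L ^ c) := by
  have hint : IntegrableOn (fun x : ℝ => c * x ^ (c - 1)) (Ioo 0 L) := by
    have h1 : IntervalIntegrable (fun x : ℝ => x ^ (c - 1)) volume 0 L :=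
      intervalIntegral.intervalIntegrable_rpow' (by linarith)
    have h2 : IntegrableOn (fun x : ℝ => x ^ (c - 1)) (Ioc 0 L) := by
      rwa [intervalIntegrable_iff_integrableOn_Ioc_of_le hL] at h1
    exact (h2.mono_set Ioo_subset_Ioc_self).const_mul c
  have hnn : 0 ≤ᵐ[volume.restrict (Ioo (0:ℝ) L)] fun x : ℝ => c * x ^ (c - 1) := by
    refine (ae_restrict_iff' measurableSet_Ioo).2 (Filter.Eventually.of_forall fun x hx => ?_)
    exact mul_nonneg hc.le (Real.rpow_nonneg hx.1.le _)
  rw [← ofReal_integral_eq_lintegral_ofReal hint hnn]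
  congr 1
  have h3 : ∫ x in Ioo (0:ℝ) L, c * x ^ (c - 1) = ∫ x in (0:ℝ)..L, c * x ^ (c - 1) := by
    rw [intervalIntegral.integral_of_le hL, ← integral_Ioc_eq_integral_Ioo]
  rw [h3, intervalIntegral.integral_const_mul, integral_rpow (Or.inl (by linarith))]
  rw [sub_add_cancel, Real.zero_rpow hc.ne', sub_zero]
  field_simp

lemma lint_Ioi_top {c : ℝ} (hc : 0 < c) :
    ∫⁻ x in Ioi (0:ℝ), ENNReal.ofReal (c * x ^ (c - 1)) = ∞ := by
  by_contra h
  set I := ∫⁻ x in Ioi (0:ℝ), ENNReal.ofReal (c * x ^ (c - 1)) with hI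
  have hIlt : I ≠ ∞ := h
  have key : ∀ L : ℝ, 0 ≤ L → ENNReal.ofReal (L ^ c) ≤ I := by
    intro L hL
    rw [← lint_Ioo hc hL]
    exact lintegral_mono' (Measure.restrict_mono Ioo_subset_Ioi_self le_rfl) le_rfl
  have h1 : ENNReal.ofReal (I.toReal + 1) ≤ I := by
    have hnn : (0:ℝ) ≤ I.toReal + 1 := by positivity
    have := key ((I.toReal + 1) ^ (1/c)) (Real.rpow_nonneg hnn _)
    rwa [← Real.rpow_mul hnn, one_div, inv_mul_cancel₀ hc.ne', Real.rpow_one] at this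
  have h2 : I.toReal + 1 ≤ I.toReal := by
    have := ENNReal.toReal_mono hIlt h1
    rwa [ENNReal.toReal_ofReal (by positivity)] at this
  linarith

lemma lint_if {c : ℝ} (hc : 0 < c) (x : ℝ≥0∞) :
    (∫⁻ s in Ioi (0:ℝ), (if ENNReal.ofReal s < x then ENNReal.ofReal (c * s ^ (c-1)) else 0))
      = x ^ c := by
  by_cases hx : x = ∞
  · subst hx
    simp only [ENNReal.ofReal_lt_top, if_true]
    rw [lint_Ioi_top hc, ENNReal.top_rpow_of_pos hc]
  · have heq : ∀ s ∈ Ioi (0:ℝ),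
        (if ENNReal.ofReal s < x then ENNReal.ofReal (c * s^(c-1)) else 0)
          = (Ioo (0:ℝ) x.toReal).indicator (fun s => ENNReal.ofReal (c * s^(c-1))) s := by
      intro s hs
      rw [Set.indicator_apply]
      by_cases h : ENNReal.ofReal s < x
      · rw [if_pos h, if_pos (mem_Ioo.2 ⟨hs, (ENNReal.ofReal_lt_iff_lt_toReal (le_of_lt hs) hx).1 h⟩)]
      · rw [if_neg h, if_neg (fun hm => h ((ENNReal.ofReal_lt_iff_lt_toReal (le_of_lt hs) hx).2 (mem_Ioo.1 hm).2))]
    rw [setLIntegral_congr_fun measurableSet_Ioi heq,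
      lintegral_indicator measurableSet_Ioo _, Measure.restrict_restrict measurableSet_Ioo,
      Set.inter_eq_self_of_subset_left Ioo_subset_Ioi_self,
      lint_Ioo hc ENNReal.toReal_nonneg,
      ← ENNReal.ofReal_rpow_of_nonneg ENNReal.toReal_nonneg hc.le,
      ENNReal.ofReal_toReal hx]

lemma lint_S {c : ℝ} (hc : 0 < c) {S : Set ℝ} (hdc : ∀ a ∈ S, Ioc (0:ℝ) a ⊆ S)
    (h0 : S ⊆ Ioi (0:ℝ)) :
    ∫⁻ x in S, ENNReal.ofReal (c * x ^ (c-1)) = (volume S) ^ c := by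
  by_cases htop : volume S = ∞
  · rw [eq_Ioi_of_top hdc h0 htop, lint_Ioi_top hc, Real.volume_Ioi, ENNReal.top_rpow_of_pos hc]
  · rw [setLIntegral_congr (ae_eq_Ioo hdc h0 htop), lint_Ioo hc ENNReal.toReal_nonneg,
      ← ENNReal.ofReal_rpow_of_nonneg ENNReal.toReal_nonneg hc.le, ENNReal.ofReal_toReal htop]

lemma key_identity {a b : ℝ} (ha : 0 < a) (hb : 0 < b) {D : ℝ → ℝ≥0∞} (hD : Antitone D) :
    ∫⁻ lam in Ioi (0:ℝ), ENNReal.ofReal (a * lam ^ (a-1)) * (D lam) ^ b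
      = ∫⁻ t in Ioi (0:ℝ), ENNReal.ofReal (b * t ^ (b-1)) * (rr D t) ^ a := by
  have hDm : Measurable D := hD.measurable
  have hmeas : Measurable (Function.uncurry fun lam t : ℝ =>
      ENNReal.ofReal (a * lam ^ (a-1)) *
        (if ENNReal.ofReal t < D lam then ENNReal.ofReal (b * t ^ (b-1)) else 0)) := by
    apply Measurable.mul
    · exact (((measurable_fst.pow measurable_const).const_mul a).ennreal_ofReal)
    · exact Measurable.ite
        (measurableSet_lt (ENNReal.measurable_ofReal.comp measurable_snd)
          (hDm.comp measurable_fst))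
        (((measurable_snd.pow measurable_const).const_mul b).ennreal_ofReal)
        measurable_const
  have step1 : ∀ lam ∈ Ioi (0:ℝ),
      ENNReal.ofReal (a * lam ^ (a-1)) * (D lam) ^ b
        = ∫⁻ t in Ioi (0:ℝ), ENNReal.ofReal (a * lam ^ (a-1)) *
            (if ENNReal.ofReal t < D lam then ENNReal.ofReal (b * t ^ (b-1)) else 0) := by
    intro lam _
    rw [lintegral_const_mul _ (Measurable.ite
        (measurableSet_lt ENNReal.measurable_ofReal measurable_const)
        (((measurable_id'.pow measurable_const).const_mul b).ennreal_ofReal)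
        measurable_const), lint_if hb (D lam)]
  have step2 : ∀ t ∈ Ioi (0:ℝ),
      (∫⁻ lam in Ioi (0:ℝ), ENNReal.ofReal (a * lam ^ (a-1)) *
          (if ENNReal.ofReal t < D lam then ENNReal.ofReal (b * t ^ (b-1)) else 0))
        = ENNReal.ofReal (b * t ^ (b-1)) * (rr D t) ^ a := by
    intro t _
    set St : Set ℝ := {x | 0 < x ∧ ENNReal.ofReal t < D x} with hSt
    have hStm : MeasurableSet St := by
      have : St = Ioi 0 ∩ {x | ENNReal.ofReal t < D x} := by
        ext x; simp [hSt, mem_Ioi, and_comm]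
      rw [this]
      exact measurableSet_Ioi.inter (measurableSet_lt measurable_const hDm)
    have hdc : ∀ x ∈ St, Ioc (0:ℝ) x ⊆ St := fun x hx y hy =>
      ⟨hy.1, lt_of_lt_of_le hx.2 (hD hy.2)⟩
    have h0 : St ⊆ Ioi (0:ℝ) := fun x hx => hx.1
    have hcomm : ∀ lam : ℝ, ENNReal.ofReal (a * lam ^ (a-1)) *
        (if ENNReal.ofReal t < D lam then ENNReal.ofReal (b * t ^ (b-1)) else 0)
          = ENNReal.ofReal (b * t ^ (b-1)) *
            (if ENNReal.ofReal t < D lam then ENNReal.ofReal (a * lam ^ (a-1)) else 0) := by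
      intro lam; split_ifs <;> simp [mul_comm]
    simp only [hcomm]
    rw [lintegral_const_mul _ (Measurable.ite
        (measurableSet_lt measurable_const hDm)
        (((measurable_id'.pow measurable_const).const_mul a).ennreal_ofReal)
        measurable_const)]
    congr 1
    have hind : ∀ lam ∈ Ioi (0:ℝ),
        (if ENNReal.ofReal t < D lam then ENNReal.ofReal (a * lam ^ (a-1)) else 0)
          = St.indicator (fun x => ENNReal.ofReal (a * x ^ (a-1))) lam := by
      intro lam hlam
      have hl : (0:ℝ) < lam := hlam
      simp only [Set.indicator_apply, mem_setOf_eq, hl, true_and, St]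
    rw [setLIntegral_congr_fun measurableSet_Ioi hind,
      lintegral_indicator hStm _, Measure.restrict_restrict hStm,
      Set.inter_eq_self_of_subset_left h0, lint_S ha hdc h0]
    rfl
  rw [setLIntegral_congr_fun measurableSet_Ioi step1,
    lintegral_lintegral_swap hmeas.aemeasurable,
    setLIntegral_congr_fun measurableSet_Ioi step2]

lemma sSup_Iio_self {y : ℝ≥0∞} (hy : y ≠ 0) : sSup (Iio y) = y := by
  refine le_antisymm (sSup_le fun z hz => hz.le) ?_
  by_contra h
  push_neg at h
  obtain ⟨w, hw1, hw2⟩ := exists_between h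
  exact absurd (le_sSup (mem_Iio.2 hw2)) (not_le.2 hw1)

lemma mul_le_of_forall_lt {x y M : ℝ≥0∞} (h : ∀ z, z < y → x * z ≤ M) : x * y ≤ M := by
  rcases eq_or_ne y 0 with rfl | hy
  · simp
  · rw [← sSup_Iio_self hy, ENNReal.mul_sSup]
    exact iSup₂_le fun z hz => h z hz

/-- Sup-duality. -/
lemma dual_sup {q : ℝ} (hq : 1 ≤ q) {D : ℝ → ℝ≥0∞} (hD : Antitone D) :
    (⨆ lam ∈ Ioi (0:ℝ), ENNReal.ofReal lam * D lam ^ (1/q))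
      = ⨆ t ∈ Ioi (0:ℝ), (ENNReal.ofReal t) ^ (1/q) * rr D t := by
  have hq0 : (0:ℝ) < q := lt_of_lt_of_le one_pos hq
  have hq0' : (0:ℝ) < 1/q := by positivity
  apply le_antisymm
  · refine iSup₂_le fun lam hlam => ?_
    have hlam' : (0:ℝ) < lam := hlam
    set y := D lam with hy
    rcases eq_or_ne y 0 with h0 | h0
    · rw [h0, ENNReal.zero_rpow_of_pos hq0', mul_zero]; exact zero_le
    have hC : ∀ z, z < y ^ (1/q) → ENNReal.ofReal lam * z ≤
        ⨆ t ∈ Ioi (0:ℝ), (ENNReal.ofReal t) ^ (1/q) * rr D t := by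
      intro z hz
      have hw : z ^ q < y := by
        have := ENNReal.rpow_lt_rpow hz hq0
        rwa [← ENNReal.rpow_mul, one_div_mul_cancel hq0.ne', ENNReal.rpow_one] at this
      rcases eq_or_ne (z ^ q) 0 with hz0 | hz0
      · have : z = 0 := by
          rcases ENNReal.rpow_eq_zero_iff.1 hz0 with ⟨h1, _⟩ | ⟨h1, h2⟩
          · exact h1
          · exact absurd h2 (not_lt.2 hq0.le)
        rw [this, mul_zero]; exact zero_le
      have hztop : z ^ q ≠ ∞ := fun htop => (htop ▸ hw).not_ge le_top
      set t := (z ^ q).toReal with ht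
      have htpos : 0 < t := ENNReal.toReal_pos hz0 hztop
      have hofReal : ENNReal.ofReal t = z ^ q := ENNReal.ofReal_toReal hztop
      have h1 : ENNReal.ofReal t < D lam := by rw [hofReal]; exact hw
      have h2 : ENNReal.ofReal lam ≤ rr D t := le_rr hD hlam' h1
      have h3 : (ENNReal.ofReal t) ^ (1/q) = z := by
        rw [hofReal, ← ENNReal.rpow_mul, mul_one_div, div_self hq0.ne', ENNReal.rpow_one]
      calc ENNReal.ofReal lam * z = (ENNReal.ofReal t) ^ (1/q) * ENNReal.ofReal lam := by
            rw [h3, mul_comm]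
        _ ≤ (ENNReal.ofReal t) ^ (1/q) * rr D t := by gcongr
        _ ≤ ⨆ t ∈ Ioi (0:ℝ), (ENNReal.ofReal t) ^ (1/q) * rr D t := le_iSup₂ (f := fun (s : ℝ) (_ : s ∈ Ioi (0:ℝ)) => (ENNReal.ofReal s) ^ (1/q) * rr D s) t htpos
    exact mul_le_of_forall_lt hC
  · refine iSup₂_le fun t ht => ?_
    have hvol : rr D t = ⨆ lam ∈ {x : ℝ | 0 < x ∧ ENNReal.ofReal t < D x}, ENNReal.ofReal lam :=
      vol_biSup (fun a ha y hy => ⟨hy.1, lt_of_lt_of_le ha.2 (hD hy.2)⟩) (fun x hx => hx.1)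
    rw [hvol, ENNReal.mul_iSup]
    refine iSup_le fun lam => ?_
    rw [ENNReal.mul_iSup]
    refine iSup_le fun hlam => ?_
    calc (ENNReal.ofReal t) ^ (1/q) * ENNReal.ofReal lam
        ≤ (D lam) ^ (1/q) * ENNReal.ofReal lam := by
          gcongr
          exact hlam.2.le
      _ ≤ ⨆ lam ∈ Ioi (0:ℝ), ENNReal.ofReal lam * D lam ^ (1/q) := by
          rw [mul_comm]; exact le_iSup₂ (f := fun (s : ℝ) (_ : s ∈ Ioi (0:ℝ)) => ENNReal.ofReal s * D s ^ (1/q)) lam hlam.1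

lemma cancel {c x y : ℝ≥0∞} (h0 : c ≠ 0) (hi : c ≠ ∞) (h : c * x = c * y) : x = y :=
  le_antisymm ((ENNReal.mul_le_mul_iff_right h0 hi).1 h.le) ((ENNReal.mul_le_mul_iff_right h0 hi).1 h.ge)

lemma integrand1 {q a : ℝ} (hq : 1 ≤ q) (ha : 1 ≤ a) (x : ℝ≥0∞) {lam : ℝ} (hl : 0 < lam) :
    ENNReal.ofReal (a * lam ^ (a-1)) * x ^ (a/q)
      = ENNReal.ofReal a * ((ENNReal.ofReal lam * x ^ (1/q)) ^ a * ENNReal.ofReal (1/lam)) := by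
  have ha0 : (0:ℝ) < a := lt_of_lt_of_le one_pos ha
  have h1 : (ENNReal.ofReal lam * x ^ (1/q)) ^ a
      = ENNReal.ofReal (lam ^ a) * x ^ (a/q) := by
    rw [ENNReal.mul_rpow_of_nonneg _ _ ha0.le, ← ENNReal.rpow_mul,
      ENNReal.ofReal_rpow_of_pos hl, one_div, inv_mul_eq_div]
  have h2 : lam ^ (a-1) = lam ^ a * (1/lam) := by
    rw [Real.rpow_sub hl, Real.rpow_one, div_eq_mul_inv, one_div]
  rw [h1, ENNReal.ofReal_mul ha0.le, h2, ENNReal.ofReal_mul (Real.rpow_nonneg hl.le _)]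
  ring

lemma integrand2 {q a : ℝ} (hq : 1 ≤ q) (ha : 1 ≤ a) (R : ℝ≥0∞) {t : ℝ} (ht : 0 < t) :
    ENNReal.ofReal ((a/q) * t ^ (a/q - 1)) * R ^ a
      = ENNReal.ofReal (a/q) * (((ENNReal.ofReal t) ^ (1/q) * R) ^ a * ENNReal.ofReal (1/t)) := by
  have ha0 : (0:ℝ) < a := lt_of_lt_of_le one_pos ha
  have hq0 : (0:ℝ) < q := lt_of_lt_of_le one_pos hq
  have hb0 : (0:ℝ) < a/q := by positivity
  have h1 : ((ENNReal.ofReal t) ^ (1/q) * R) ^ a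
      = ENNReal.ofReal (t ^ (a/q)) * R ^ a := by
    rw [ENNReal.mul_rpow_of_nonneg _ _ ha0.le, ← ENNReal.rpow_mul,
      ENNReal.ofReal_rpow_of_pos ht, one_div, inv_mul_eq_div]
  have h2 : t ^ (a/q - 1) = t ^ (a/q) * (1/t) := by
    rw [Real.rpow_sub ht, Real.rpow_one, div_eq_mul_inv, one_div]
  rw [h1, ENNReal.ofReal_mul hb0.le, h2, ENNReal.ofReal_mul (Real.rpow_nonneg ht.le _)]
  ring

lemma dual_eq_fin {q a : ℝ} (hq : 1 ≤ q) (ha : 1 ≤ a) {D : ℝ → ℝ≥0∞} (hD : Antitone D) :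
    ENNReal.ofReal a *
        ∫⁻ lam in Ioi (0:ℝ), (ENNReal.ofReal lam * D lam ^ (1/q)) ^ a * ENNReal.ofReal (1/lam)
      = ENNReal.ofReal (a/q) *
        ∫⁻ t in Ioi (0:ℝ), ((ENNReal.ofReal t) ^ (1/q) * rr D t) ^ a * ENNReal.ofReal (1/t) := by
  have ha0 : (0:ℝ) < a := lt_of_lt_of_le one_pos ha
  have hq0 : (0:ℝ) < q := lt_of_lt_of_le one_pos hq
  have hb0 : (0:ℝ) < a/q := by positivity
  rw [← lintegral_const_mul' _ _ ENNReal.ofReal_ne_top,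
    ← lintegral_const_mul' _ _ ENNReal.ofReal_ne_top,
    setLIntegral_congr_fun measurableSet_Ioi
      fun ⦃lam⦄ hl => (integrand1 hq ha (D lam) hl).symm,
    setLIntegral_congr_fun measurableSet_Ioi
      fun ⦃t⦄ ht => (integrand2 hq ha (rr D t) ht).symm]
  exact key_identity ha0 hb0 hD

lemma toReal_one_le {α : ℝ≥0∞} (hα : 1 ≤ α) (htop : α ≠ ∞) : 1 ≤ α.toReal := by
  rw [← ENNReal.toReal_one]
  exact ENNReal.toReal_mono htop hα

lemma dual_le {q : ℝ} (hq : 1 ≤ q) {α : ℝ≥0∞} (hα : 1 ≤ α) {D : ℝ → ℝ≥0∞} (hD : Antitone D) :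
    N α (fun lam => ENNReal.ofReal lam * D lam ^ (1/q))
      ≤ N α (fun t => (ENNReal.ofReal t) ^ (1/q) * rr D t) := by
  by_cases htop : α = ∞
  · subst htop
    rw [N, if_pos rfl, N, if_pos rfl]
    exact le_of_eq (dual_sup hq hD)
  · rw [N, if_neg htop, N, if_neg htop]
    have ha : 1 ≤ α.toReal := toReal_one_le hα htop
    have ha0 : (0:ℝ) < α.toReal := lt_of_lt_of_le one_pos ha
    have key := dual_eq_fin hq ha hD
    have hAB : (∫⁻ lam in Ioi (0:ℝ),
          (ENNReal.ofReal lam * D lam ^ (1/q)) ^ α.toReal * ENNReal.ofReal (1/lam))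
        ≤ ∫⁻ t in Ioi (0:ℝ),
          ((ENNReal.ofReal t) ^ (1/q) * rr D t) ^ α.toReal * ENNReal.ofReal (1/t) := by
      refine (ENNReal.mul_le_mul_iff_right (a := ENNReal.ofReal α.toReal) ?_ ENNReal.ofReal_ne_top).1 ?_
      · simp only [ne_eq, ENNReal.ofReal_eq_zero, not_le]; linarith
      · rw [key]
        exact mul_le_mul_left (ENNReal.ofReal_le_ofReal (div_le_self ha0.le hq)) _
    exact ENNReal.rpow_le_rpow hAB (by positivity)

lemma dual_ge {q : ℝ} (hq : 1 ≤ q) {α : ℝ≥0∞} (hα : 1 ≤ α) {D : ℝ → ℝ≥0∞} (hD : Antitone D) :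
    N α (fun t => (ENNReal.ofReal t) ^ (1/q) * rr D t)
      ≤ ENNReal.ofReal q * N α (fun lam => ENNReal.ofReal lam * D lam ^ (1/q)) := by
  have hq1 : (1:ℝ≥0∞) ≤ ENNReal.ofReal q := ENNReal.one_le_ofReal.2 hq
  by_cases htop : α = ∞
  · subst htop
    rw [N, if_pos rfl, N, if_pos rfl, ← dual_sup hq hD]
    calc (⨆ lam ∈ Ioi (0:ℝ), ENNReal.ofReal lam * D lam ^ (1/q))
        = 1 * ⨆ lam ∈ Ioi (0:ℝ), ENNReal.ofReal lam * D lam ^ (1/q) := (one_mul _).symm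
      _ ≤ _ := mul_le_mul_left hq1 _
  · rw [N, if_neg htop, N, if_neg htop]
    have ha : 1 ≤ α.toReal := toReal_one_le hα htop
    have ha0 : (0:ℝ) < α.toReal := lt_of_lt_of_le one_pos ha
    have hq0 : (0:ℝ) < q := lt_of_lt_of_le one_pos hq
    have key := dual_eq_fin hq ha hD
    have hBA : (∫⁻ t in Ioi (0:ℝ),
          ((ENNReal.ofReal t) ^ (1/q) * rr D t) ^ α.toReal * ENNReal.ofReal (1/t))
        = ENNReal.ofReal q * ∫⁻ lam in Ioi (0:ℝ),
          (ENNReal.ofReal lam * D lam ^ (1/q)) ^ α.toReal * ENNReal.ofReal (1/lam) := by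
      refine cancel (c := ENNReal.ofReal (α.toReal/q)) ?_ ENNReal.ofReal_ne_top ?_
      · simp only [ne_eq, ENNReal.ofReal_eq_zero, not_le]; positivity
      · rw [← key, ← mul_assoc, ← ENNReal.ofReal_mul (by positivity)]
        congr 2
        field_simp
    rw [hBA, ENNReal.mul_rpow_of_nonneg _ _ (by positivity : (0:ℝ) ≤ 1/α.toReal)]
    gcongr
    calc (ENNReal.ofReal q) ^ (1/α.toReal) ≤ (ENNReal.ofReal q) ^ (1:ℝ) :=
        ENNReal.rpow_le_rpow_of_exponent_le hq1 (by rw [div_le_one ha0]; exact ha)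
      _ = ENNReal.ofReal q := ENNReal.rpow_one _

lemma ofReal_half_add {t : ℝ} :
    ENNReal.ofReal (t/2) + ENNReal.ofReal (t/2) = ENNReal.ofReal t := by
  rcases le_or_gt t 0 with h | h
  · simp [ENNReal.ofReal_eq_zero.2 (by linarith : t/2 ≤ 0), ENNReal.ofReal_eq_zero.2 h]
  · rw [← ENNReal.ofReal_add (by linarith) (by linarith), add_halves]

/-- if `g` is small (distribution below `t/2` at all positive levels), then `rr (dd (h*g)) t = 0`. -/
lemma support_bound {Ω : Type*} [MeasurableSpace Ω] (μ : Measure Ω) (h g : Ω → ℂ) {t : ℝ}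
    (ht : 0 < t) (hsmall : ∀ s : ℝ, 0 < s → dd μ g s ≤ ENNReal.ofReal (t/2)) :
    rr (dd μ fun ω => h ω * g ω) t = 0 := by
  have hsupp : μ {ω | 0 < ‖g ω‖} ≤ ENNReal.ofReal (t/2) := by
    have hun : {ω | 0 < ‖g ω‖}
        = ⋃ n : ℕ, {ω | (1:ℝ)/(n+1) < ‖g ω‖} := by
      ext ω
      simp only [mem_setOf_eq, mem_iUnion]
      constructor
      · intro hω
        obtain ⟨n, hn⟩ := exists_nat_one_div_lt hω
        exact ⟨n, hn⟩
      · rintro ⟨n, hn⟩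
        exact lt_of_le_of_lt (by positivity) hn
    have hmono : Monotone fun n : ℕ => {ω | (1:ℝ)/(n+1) < ‖g ω‖} := by
      intro n m hnm ω hω
      simp only [mem_setOf_eq] at hω ⊢
      refine lt_of_le_of_lt ?_ hω
      refine one_div_le_one_div_of_le (by positivity) ?_
      have : (n:ℝ) ≤ (m:ℝ) := Nat.cast_le.2 hnm
      linarith
    rw [hun, hmono.directed_le.measure_iUnion]
    exact iSup_le fun n => hsmall _ (by positivity)
  have hdd : ∀ lam : ℝ, 0 < lam →
      dd μ (fun ω => h ω * g ω) lam ≤ ENNReal.ofReal (t/2) := by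
    intro lam hlam
    refine le_trans (measure_mono fun ω hω => ?_) hsupp
    simp only [mem_setOf_eq] at hω ⊢
    by_contra hcon
    push_neg at hcon
    have : ‖g ω‖ = 0 := le_antisymm hcon (norm_nonneg _)
    rw [norm_mul, this, mul_zero] at hω
    exact absurd hω (not_lt.2 hlam.le)
  have hempty : {lam : ℝ | 0 < lam ∧ ENNReal.ofReal t < dd μ (fun ω => h ω * g ω) lam} = ∅ := by
    ext lam
    simp only [mem_setOf_eq, mem_empty_iff_false, iff_false, not_and, not_lt]
    intro hlam
    exact le_trans (hdd lam hlam) (ENNReal.ofReal_le_ofReal (by linarith))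
  rw [rr, hempty, measure_empty]

lemma dd_mul_comm {Ω : Type*} [MeasurableSpace Ω] (μ : Measure Ω) (f g : Ω → ℂ) :
    dd μ (fun ω => f ω * g ω) = dd μ (fun ω => g ω * f ω) := by
  funext lam
  simp only [dd, mul_comm]

/-- The key pointwise product inequality. -/
lemma rr_dd_mul_le {Ω : Type*} [MeasurableSpace Ω] (μ : Measure Ω) (f g : Ω → ℂ) {t : ℝ}
    (ht : 0 < t) :
    rr (dd μ fun ω => f ω * g ω) t ≤ rr (dd μ f) (t/2) * rr (dd μ g) (t/2) := by
  set A := rr (dd μ f) (t/2) with hA_def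
  set B := rr (dd μ g) (t/2) with hB_def
  have hf' : ∀ s : ℝ, 0 < s → A < ENNReal.ofReal s → dd μ f s ≤ ENNReal.ofReal (t/2) :=
    fun s hs hlt => dd_le_of_gt (dd_anti μ f) hs hlt
  have hg' : ∀ s : ℝ, 0 < s → B < ENNReal.ofReal s → dd μ g s ≤ ENNReal.ofReal (t/2) :=
    fun s hs hlt => dd_le_of_gt (dd_anti μ g) hs hlt
  by_cases hA : A = ∞
  · by_cases hB : B = 0
    · rw [support_bound μ f g ht
        (fun s hs => hg' s hs (by rw [hB]; exact ENNReal.ofReal_pos.2 hs))]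
      exact zero_le
    · rw [hA, ENNReal.top_mul hB]; exact le_top
  · by_cases hB : B = ∞
    · by_cases hA0 : A = 0
      · have : rr (dd μ fun ω => g ω * f ω) t = 0 :=
          support_bound μ g f ht
            (fun s hs => hf' s hs (by rw [hA0]; exact ENNReal.ofReal_pos.2 hs))
        rw [← dd_mul_comm] at this
        rw [this]
        exact zero_le
      · rw [hB, ENNReal.mul_top hA0]; exact le_top
    · -- both finite
      have claim : ∀ lam : ℝ,
          lam ∈ {lam : ℝ | 0 < lam ∧ ENNReal.ofReal t < dd μ (fun ω => f ω * g ω) lam} →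
            lam ≤ A.toReal * B.toReal := by
        rintro lam ⟨hlam0, hlamS⟩
        have step : ∀ u v : ℝ, A.toReal < u → B.toReal < v → lam < u * v := by
          intro u v hu hv
          have hu0 : 0 < u := lt_of_le_of_lt ENNReal.toReal_nonneg hu
          have hv0 : 0 < v := lt_of_le_of_lt ENNReal.toReal_nonneg hv
          have h1 : dd μ f u ≤ ENNReal.ofReal (t/2) :=
            hf' u hu0 ((ENNReal.lt_ofReal_iff_toReal_lt hA).2 hu)
          have h2 : dd μ g v ≤ ENNReal.ofReal (t/2) :=
            hg' v hv0 ((ENNReal.lt_ofReal_iff_toReal_lt hB).2 hv)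
          by_contra hcon
          push_neg at hcon
          have h3 : dd μ (fun ω => f ω * g ω) lam ≤ dd μ (fun ω => f ω * g ω) (u*v) :=
            dd_anti μ _ hcon
          have h4 : dd μ (fun ω => f ω * g ω) (u*v)
              ≤ dd μ f u + dd μ g v := by
            refine le_trans (measure_mono ?_) (measure_union_le _ _)
            intro ω hω
            simp only [mem_setOf_eq, mem_union] at hω ⊢
            by_contra hc
            push_neg at hc
            have := mul_le_mul hc.1 hc.2 (norm_nonneg _) hu0.le
            rw [← norm_mul] at this
            exact absurd hω (not_lt.2 this)
          have h5 : ENNReal.ofReal t < ENNReal.ofReal t :=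
            lt_of_lt_of_le hlamS (le_trans h3 (le_trans h4
              (le_trans (add_le_add h1 h2) (le_of_eq ofReal_half_add))))
          exact lt_irrefl _ h5
        by_contra hcon
        push_neg at hcon
        rcases eq_or_lt_of_le (mul_nonneg ENNReal.toReal_nonneg ENNReal.toReal_nonneg :
            (0:ℝ) ≤ A.toReal * B.toReal) with hP | hP
        · rcases mul_eq_zero.1 hP.symm with h0 | h0
          · have hv0 : (0:ℝ) < B.toReal + 1 := by positivity
            have := step (lam / (B.toReal+1)) (B.toReal+1)
              (by rw [h0]; positivity) (lt_add_one _)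
            rw [div_mul_cancel₀ _ hv0.ne'] at this
            exact lt_irrefl _ this
          · have hu0 : (0:ℝ) < A.toReal + 1 := by positivity
            have := step (A.toReal+1) (lam / (A.toReal+1))
              (lt_add_one _) (by rw [h0]; positivity)
            rw [mul_div_cancel₀ _ hu0.ne'] at this
            exact lt_irrefl _ this
        · set P := A.toReal * B.toReal with hP_def
          have hA0 : 0 < A.toReal := by
            rcases lt_or_ge 0 A.toReal with h | h
            · exact h
            · exfalso
              have : A.toReal = 0 := le_antisymm h ENNReal.toReal_nonneg
              rw [hP_def, this, zero_mul] at hP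
              exact lt_irrefl _ hP
          have hB0 : 0 < B.toReal := by
            rcases lt_or_ge 0 B.toReal with h | h
            · exact h
            · exfalso
              have : B.toReal = 0 := le_antisymm h ENNReal.toReal_nonneg
              rw [hP_def, this, mul_zero] at hP
              exact lt_irrefl _ hP
          set c := Real.sqrt (lam / P) with hc_def
          have hlP : 1 < lam / P := (one_lt_div hP).2 hcon
          have hc1 : 1 < c := by
            rw [hc_def]
            rw [show (1:ℝ) = Real.sqrt 1 from (Real.sqrt_one).symm]
            exact Real.sqrt_lt_sqrt (by norm_num) hlP
          have hcc : c * c = lam / P := Real.mul_self_sqrt (by positivity)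
          have := step (A.toReal * c) (B.toReal * c)
            (by nlinarith) (by nlinarith)
          have heq : (A.toReal * c) * (B.toReal * c) = lam := by
            have : (A.toReal * c) * (B.toReal * c) = P * (c * c) := by ring
            rw [this, hcc, mul_div_cancel₀ _ hP.ne']
          rw [heq] at this
          exact lt_irrefl _ this
      have hABtop : A * B ≠ ∞ := ENNReal.mul_ne_top hA hB
      have hsub : {lam : ℝ | 0 < lam ∧ ENNReal.ofReal t < dd μ (fun ω => f ω * g ω) lam}
          ⊆ Ioc (0:ℝ) ((A*B).toReal) := by
        intro lam hlam
        refine ⟨hlam.1, ?_⟩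
        have h1 : ENNReal.ofReal lam ≤ A * B := by
          calc ENNReal.ofReal lam ≤ ENNReal.ofReal (A.toReal * B.toReal) :=
              ENNReal.ofReal_le_ofReal (claim lam hlam)
            _ = ENNReal.ofReal A.toReal * ENNReal.ofReal B.toReal :=
              ENNReal.ofReal_mul ENNReal.toReal_nonneg
            _ = A * B := by rw [ENNReal.ofReal_toReal hA, ENNReal.ofReal_toReal hB]
        exact (ENNReal.ofReal_le_iff_le_toReal hABtop).1 h1
      calc rr (dd μ fun ω => f ω * g ω) t
          ≤ volume (Ioc (0:ℝ) ((A*B).toReal)) := measure_mono hsub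
        _ = ENNReal.ofReal ((A*B).toReal) := by rw [Real.volume_Ioc, sub_zero]
        _ ≤ A * B := ENNReal.ofReal_toReal_le

lemma N_mono {β : ℝ≥0∞} {F G : ℝ → ℝ≥0∞} (h : ∀ t, F t ≤ G t) : N β F ≤ N β G := by
  unfold N
  split_ifs
  · exact iSup_mono fun t => iSup_mono fun _ => h t
  · refine ENNReal.rpow_le_rpow (lintegral_mono fun t => ?_) (by positivity)
    exact mul_le_mul_left (ENNReal.rpow_le_rpow (h t) ENNReal.toReal_nonneg) _

lemma N_const_mul {β : ℝ≥0∞} (hβ : 1 ≤ β) {c : ℝ≥0∞} (hc : c ≠ ∞) (G : ℝ → ℝ≥0∞) :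
    N β (fun t => c * G t) = c * N β G := by
  unfold N
  split_ifs with h
  · simp_rw [ENNReal.mul_iSup]
  · have hb : 1 ≤ β.toReal := toReal_one_le hβ h
    have hb0 : (0:ℝ) < β.toReal := lt_of_lt_of_le one_pos hb
    have hpt : ∀ t : ℝ, (c * G t) ^ β.toReal * ENNReal.ofReal (1/t)
        = c ^ β.toReal * (G t ^ β.toReal * ENNReal.ofReal (1/t)) := by
      intro t
      rw [ENNReal.mul_rpow_of_nonneg _ _ hb0.le, mul_assoc]
    simp_rw [hpt]
    rw [lintegral_const_mul' _ _ (ENNReal.rpow_ne_top_of_nonneg hb0.le hc),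
      ENNReal.mul_rpow_of_nonneg _ _ (by positivity : (0:ℝ) ≤ 1/β.toReal),
      ← ENNReal.rpow_mul, mul_one_div, div_self hb0.ne', ENNReal.rpow_one]

lemma N_scale {β : ℝ≥0∞} (hβ : 1 ≤ β) {G : ℝ → ℝ≥0∞} (hG : Measurable G) :
    N β (fun t => G (t/2)) = N β G := by
  unfold N
  split_ifs with h
  · apply le_antisymm
    · refine iSup₂_le fun t ht => ?_
      exact le_iSup₂ (f := fun (s : ℝ) (_ : s ∈ Ioi (0:ℝ)) => G s) (t/2)
        (half_pos (mem_Ioi.1 ht))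
    · refine iSup₂_le fun s hs => ?_
      have h2 : G s = G ((2*s)/2) := by norm_num
      rw [h2]
      exact le_iSup₂ (f := fun (t : ℝ) (_ : t ∈ Ioi (0:ℝ)) => G (t/2)) (2*s)
        (by simp only [mem_Ioi] at hs ⊢; linarith)
  · congr 1
    set c := β.toReal with hc
    have hmeask : Measurable fun y : ℝ => G (y/2) ^ c * ENNReal.ofReal (1/y) :=
      ((hG.comp (measurable_id'.div_const 2)).pow measurable_const).mul
        (ENNReal.measurable_ofReal.comp (measurable_const.div measurable_id'))
    have hpre : (fun s : ℝ => 2*s) ⁻¹' (Ioi 0) = Ioi (0:ℝ) := by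
      ext x
      simp only [mem_preimage, mem_Ioi]
      constructor <;> intro hx <;> linarith
    have hmap : Measure.map (fun s : ℝ => 2 * s) (volume.restrict (Ioi (0:ℝ)))
        = (ENNReal.ofReal (1/2)) • (volume.restrict (Ioi (0:ℝ))) := by
      rw [show volume.restrict (Ioi (0:ℝ)) = volume.restrict ((fun s : ℝ => 2*s) ⁻¹' (Ioi 0))
          from by rw [hpre],
        ← Measure.restrict_map (measurable_const_mul 2) measurableSet_Ioi,
        Real.map_volume_mul_left (two_ne_zero), Measure.restrict_smul]
      norm_num [abs_of_pos]
    have lhs_eq : ∫⁻ y, (G (y/2) ^ c * ENNReal.ofReal (1/y))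
          ∂(Measure.map (fun s : ℝ => 2 * s) (volume.restrict (Ioi (0:ℝ))))
        = ENNReal.ofReal (1/2) * ∫⁻ t in Ioi (0:ℝ), G (t/2) ^ c * ENNReal.ofReal (1/t) := by
      rw [hmap, lintegral_smul_measure, smul_eq_mul]
    have rhs_eq : ∫⁻ y, (G (y/2) ^ c * ENNReal.ofReal (1/y))
          ∂(Measure.map (fun s : ℝ => 2 * s) (volume.restrict (Ioi (0:ℝ))))
        = ENNReal.ofReal (1/2) * ∫⁻ s in Ioi (0:ℝ), G s ^ c * ENNReal.ofReal (1/s) := by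
      rw [lintegral_map hmeask (measurable_const_mul 2)]
      rw [← lintegral_const_mul' _ _ ENNReal.ofReal_ne_top]
      refine setLIntegral_congr_fun measurableSet_Ioi
        fun ⦃s⦄ hs => ?_
      have hs0 : (0:ℝ) < s := hs
      have e1 : (2*s)/2 = s := by ring
      have e2 : (1:ℝ)/(2*s) = (1/2) * (1/s) := by
        field_simp
      rw [e1, e2, ENNReal.ofReal_mul (by norm_num)]
      ring
    have := lhs_eq.symm.trans rhs_eq
    exact (ENNReal.mul_le_mul_iff_right (by norm_num) ENNReal.ofReal_ne_top).1
      (le_of_eq this) |>.antisymm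
      ((ENNReal.mul_le_mul_iff_right (by norm_num) ENNReal.ofReal_ne_top).1 (ge_of_eq this))

lemma N_holder_sup {α₂ : ℝ≥0∞} (hα₂ : 1 ≤ α₂) (h2top : α₂ ≠ ∞) {F₁ F₂ : ℝ → ℝ≥0∞}
    (h2 : Measurable F₂) :
    N α₂ (fun t => F₁ t * F₂ t) ≤ (⨆ t ∈ Ioi (0:ℝ), F₁ t) * N α₂ F₂ := by
  rw [N, if_neg h2top, N, if_neg h2top]
  set c := α₂.toReal with hcdef
  have hc : 1 ≤ c := toReal_one_le hα₂ h2top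
  have hc0 : (0:ℝ) < c := lt_of_lt_of_le one_pos hc
  set S₁ := ⨆ t ∈ Ioi (0:ℝ), F₁ t with hS₁
  have hpt : ∀ t ∈ Ioi (0:ℝ), (F₁ t * F₂ t) ^ c * ENNReal.ofReal (1/t)
      ≤ S₁ ^ c * (F₂ t ^ c * ENNReal.ofReal (1/t)) := by
    intro t ht
    rw [ENNReal.mul_rpow_of_nonneg _ _ hc0.le, mul_assoc]
    exact mul_le_mul_left
      (ENNReal.rpow_le_rpow
        (le_iSup₂ (f := fun (s:ℝ) (_ : s ∈ Ioi (0:ℝ)) => F₁ s) t ht) hc0.le) _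
  calc (∫⁻ t in Ioi (0:ℝ), (F₁ t * F₂ t) ^ c * ENNReal.ofReal (1/t)) ^ (1/c)
      ≤ (∫⁻ t in Ioi (0:ℝ), S₁ ^ c * (F₂ t ^ c * ENNReal.ofReal (1/t))) ^ (1/c) :=
        ENNReal.rpow_le_rpow (setLIntegral_mono' measurableSet_Ioi hpt) (by positivity)
    _ = S₁ * (∫⁻ t in Ioi (0:ℝ), F₂ t ^ c * ENNReal.ofReal (1/t)) ^ (1/c) := by
        rw [lintegral_const_mul _ (f := fun t => F₂ t ^ c * ENNReal.ofReal (1/t)) ((h2.pow measurable_const).mul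
            (Measurable.ennreal_ofReal (measurable_const.div measurable_id'))),
          ENNReal.mul_rpow_of_nonneg _ _ (by positivity : (0:ℝ) ≤ 1/c),
          ← ENNReal.rpow_mul, mul_one_div, div_self hc0.ne', ENNReal.rpow_one]

lemma N_holder {α α₁ α₂ : ℝ≥0∞} (hα : 1 ≤ α) (hα₁ : 1 ≤ α₁) (hα₂ : 1 ≤ α₂)
    (hαe : 1/α = 1/α₁ + 1/α₂) {F₁ F₂ : ℝ → ℝ≥0∞} (h1 : Measurable F₁) (h2 : Measurable F₂) :
    N α (fun t => F₁ t * F₂ t) ≤ N α₁ F₁ * N α₂ F₂ := by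
  have h1ne : α₁ ≠ 0 := fun h => by simp [h] at hα₁
  have h2ne : α₂ ≠ 0 := fun h => by simp [h] at hα₂
  by_cases h1top : α₁ = ∞
  · by_cases h2top : α₂ = ∞
    · -- both sup
      have hatop : α = ∞ := by
        have h0 : 1/α = 0 := by rw [hαe, h1top, h2top]; simp
        rcases ENNReal.div_eq_zero_iff.1 h0 with h | h
        · exact absurd h one_ne_zero
        · exact h
      subst hatop h1top h2top
      rw [N, if_pos rfl, N, if_pos rfl, N, if_pos rfl]
      refine iSup₂_le fun t ht => ?_
      exact mul_le_mul' (le_iSup₂ (f := fun (s:ℝ) (_ : s ∈ Ioi (0:ℝ)) => F₁ s) t ht)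
        (le_iSup₂ (f := fun (s:ℝ) (_ : s ∈ Ioi (0:ℝ)) => F₂ s) t ht)
    · -- α₁ = ∞, α = α₂
      have hα_eq : α = α₂ := by
        have h0 : α⁻¹ = α₂⁻¹ := by
          have := hαe
          rw [h1top] at this
          simpa [one_div] using this
        rw [← inv_inv α, h0, inv_inv]
      subst hα_eq h1top
      have hNtop : N ⊤ F₁ = ⨆ t ∈ Ioi (0:ℝ), F₁ t := by rw [N, if_pos rfl]
      rw [hNtop]
      exact N_holder_sup hα₂ h2top h2
  · by_cases h2top : α₂ = ∞
    · -- α₂ = ∞, α = α₁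
      have hα_eq : α = α₁ := by
        have h0 : α⁻¹ = α₁⁻¹ := by
          have := hαe
          rw [h2top] at this
          simpa [one_div] using this
        rw [← inv_inv α, h0, inv_inv]
      subst hα_eq h2top
      have hNtop : N ⊤ F₂ = ⨆ t ∈ Ioi (0:ℝ), F₂ t := by rw [N, if_pos rfl]
      rw [hNtop]
      calc N α (fun t => F₁ t * F₂ t) = N α (fun t => F₂ t * F₁ t) := by
            simp only [mul_comm]
        _ ≤ (⨆ t ∈ Ioi (0:ℝ), F₂ t) * N α F₁ := N_holder_sup hα₁ h1top h1
        _ = N α F₁ * ⨆ t ∈ Ioi (0:ℝ), F₂ t := mul_comm _ _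
    · -- both finite
      have hatop : α ≠ ∞ := by
        intro h
        have h0 : (0:ℝ≥0∞) = 1/α₁ + 1/α₂ := by rw [← hαe, h]; simp
        have h1z : (1:ℝ≥0∞)/α₁ = 0 := by
          have := (add_eq_zero.1 h0.symm).1
          exact this
        rcases ENNReal.div_eq_zero_iff.1 h1z with hh | hh
        · exact absurd hh one_ne_zero
        · exact h1top hh
      set A := α.toReal with hA
      set A₁ := α₁.toReal with hA₁
      set A₂ := α₂.toReal with hA₂
      have hA1 : 1 ≤ A := toReal_one_le hα hatop
      have hA₁1 : 1 ≤ A₁ := toReal_one_le hα₁ h1top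
      have hA₂1 : 1 ≤ A₂ := toReal_one_le hα₂ h2top
      have hA0 : (0:ℝ) < A := lt_of_lt_of_le one_pos hA1
      have hA₁0 : (0:ℝ) < A₁ := lt_of_lt_of_le one_pos hA₁1
      have hA₂0 : (0:ℝ) < A₂ := lt_of_lt_of_le one_pos hA₂1
      have hsum : 1/A = 1/A₁ + 1/A₂ := by
        have h := congrArg ENNReal.toReal hαe
        rw [ENNReal.toReal_add (by simp [ENNReal.div_eq_top, h1ne, h1top])
            (by simp [ENNReal.div_eq_top, h2ne, h2top])] at h
        simpa only [ENNReal.toReal_div, ENNReal.toReal_one] using h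
      set p := A₁/A with hp_def
      set p' := A₂/A with hp'_def
      have hApA : A * p = A₁ := by rw [hp_def]; field_simp
      have hApA' : A * p' = A₂ := by rw [hp'_def]; field_simp
      have hp : Real.HolderConjugate p p' := by
        rw [Real.holderConjugate_iff]
        constructor
        · have h1 : 1/A₁ < 1/A := by
            have h2 : (0:ℝ) < 1/A₂ := by positivity
            linarith
          have h3 : 1 * A < 1 * A₁ := (div_lt_div_iff₀ hA₁0 hA0).1 h1
          rw [hp_def]
          rw [one_lt_div hA0]
          linarith
        · rw [hp_def, hp'_def, inv_div, inv_div]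
          have : A/A₁ + A/A₂ = A * (1/A₁ + 1/A₂) := by ring
          rw [this, ← hsum, mul_one_div, div_self hA0.ne']
      rw [N, if_neg hatop, N, if_neg h1top, N, if_neg h2top, ← hA, ← hA₁, ← hA₂]
      set w : ℝ → ℝ≥0∞ := fun t => ENNReal.ofReal (1/t) with hw
      have hwm : Measurable w := ENNReal.measurable_ofReal.comp (measurable_const.div measurable_id')
      have hfm : Measurable fun t => F₁ t ^ A * w t ^ (1/p) :=
        (h1.pow measurable_const).mul (hwm.pow measurable_const)
      have hgm : Measurable fun t => F₂ t ^ A * w t ^ (1/p') :=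
        (h2.pow measurable_const).mul (hwm.pow measurable_const)
      have step1 : (∫⁻ t in Ioi (0:ℝ), (F₁ t * F₂ t) ^ A * w t)
          = ∫⁻ t in Ioi (0:ℝ),
              ((fun t => F₁ t ^ A * w t ^ (1/p)) * fun t => F₂ t ^ A * w t ^ (1/p')) t := by
        refine setLIntegral_congr_fun measurableSet_Ioi
          fun ⦃t⦄ ht => ?_
        have ht0 : (0:ℝ) < t := ht
        have hw0 : w t ≠ 0 := by
          simp only [hw, ne_eq, ENNReal.ofReal_eq_zero, not_le]
          positivity
        have hwt : w t ≠ ∞ := ENNReal.ofReal_ne_top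
        simp only [Pi.mul_apply]
        rw [ENNReal.mul_rpow_of_nonneg _ _ hA0.le]
        have hrw : w t ^ (1/p) * w t ^ (1/p') = w t := by
          rw [← ENNReal.rpow_add _ _ hw0 hwt]
          rw [show 1/p + 1/p' = 1 from by
            rw [one_div, one_div]; exact hp.inv_add_inv_eq_one]
          exact ENNReal.rpow_one _
        calc F₁ t ^ A * F₂ t ^ A * w t
            = F₁ t ^ A * F₂ t ^ A * (w t ^ (1/p) * w t ^ (1/p')) := by rw [hrw]
          _ = F₁ t ^ A * w t ^ (1/p) * (F₂ t ^ A * w t ^ (1/p')) := by ring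
      have step2 := ENNReal.lintegral_mul_le_Lp_mul_Lq (volume.restrict (Ioi (0:ℝ))) hp
        hfm.aemeasurable hgm.aemeasurable
      have e1 : (∫⁻ t in Ioi (0:ℝ), (F₁ t ^ A * w t ^ (1/p)) ^ p)
          = ∫⁻ t in Ioi (0:ℝ), F₁ t ^ A₁ * w t := by
        refine setLIntegral_congr_fun measurableSet_Ioi
          fun ⦃t⦄ ht => ?_
        rw [ENNReal.mul_rpow_of_nonneg _ _ hp.nonneg, ← ENNReal.rpow_mul, ← ENNReal.rpow_mul,
          one_div_mul_cancel hp.ne_zero, ENNReal.rpow_one, hApA]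
      have e2 : (∫⁻ t in Ioi (0:ℝ), (F₂ t ^ A * w t ^ (1/p')) ^ p')
          = ∫⁻ t in Ioi (0:ℝ), F₂ t ^ A₂ * w t := by
        refine setLIntegral_congr_fun measurableSet_Ioi
          fun ⦃t⦄ ht => ?_
        rw [ENNReal.mul_rpow_of_nonneg _ _ hp.symm.nonneg, ← ENNReal.rpow_mul,
          ← ENNReal.rpow_mul, one_div_mul_cancel hp.symm.ne_zero, ENNReal.rpow_one, hApA']
      rw [step1] at *
      have final : (∫⁻ t in Ioi (0:ℝ),
            ((fun t => F₁ t ^ A * w t ^ (1/p)) * fun t => F₂ t ^ A * w t ^ (1/p')) t)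
          ≤ (∫⁻ t in Ioi (0:ℝ), F₁ t ^ A₁ * w t) ^ (1/p)
            * (∫⁻ t in Ioi (0:ℝ), F₂ t ^ A₂ * w t) ^ (1/p') := by
        rw [← e1, ← e2]
        exact step2
      calc (∫⁻ t in Ioi (0:ℝ),
            ((fun t => F₁ t ^ A * w t ^ (1/p)) * fun t => F₂ t ^ A * w t ^ (1/p')) t) ^ (1/A)
          ≤ ((∫⁻ t in Ioi (0:ℝ), F₁ t ^ A₁ * w t) ^ (1/p)
              * (∫⁻ t in Ioi (0:ℝ), F₂ t ^ A₂ * w t) ^ (1/p')) ^ (1/A) :=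
            ENNReal.rpow_le_rpow final (by positivity)
        _ = (∫⁻ t in Ioi (0:ℝ), F₁ t ^ A₁ * w t) ^ (1/A₁)
            * (∫⁻ t in Ioi (0:ℝ), F₂ t ^ A₂ * w t) ^ (1/A₂) := by
            rw [ENNReal.mul_rpow_of_nonneg _ _ (by positivity : (0:ℝ) ≤ 1/A),
              ← ENNReal.rpow_mul, ← ENNReal.rpow_mul]
            congr 1
            · congr 1
              rw [hp_def]
              field_simp
            · congr 1
              rw [hp'_def]
              field_simp

end LorentzHolderAux

open LorentzHolderAux

/-- Hölder's inequality in Lorentz spaces: if `1/q = 1/q₁ + 1/q₂` and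
`1/α = 1/α₁ + 1/α₂`, then `‖fg‖_{L^{q,α}} ≤ C ‖f‖_{L^{q₁,α₁}} ‖g‖_{L^{q₂,α₂}}` with a
constant depending only on the exponents. -/
theorem lorentz_holder
    (q q₁ q₂ : ℝ) (α α₁ α₂ : ℝ≥0∞)
    (hq : 1 ≤ q) (hq₁ : 1 ≤ q₁) (hq₂ : 1 ≤ q₂)
    (hα : 1 ≤ α) (hα₁ : 1 ≤ α₁) (hα₂ : 1 ≤ α₂)
    (hqe : 1 / q = 1 / q₁ + 1 / q₂) (hαe : 1 / α = 1 / α₁ + 1 / α₂) :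
    ∃ C : ℝ, 0 < C ∧
      ∀ (Ω : Type*) [MeasurableSpace Ω] (μ : Measure Ω) [SigmaFinite μ]
        (f g : Ω → ℂ), Measurable f → Measurable g →
        lorentzNorm μ q α (fun ω => f ω * g ω)
          ≤ ENNReal.ofReal C * (lorentzNorm μ q₁ α₁ f * lorentzNorm μ q₂ α₂ g) := by
  have hq₁0 : (0:ℝ) < q₁ := lt_of_lt_of_le one_pos hq₁
  have hq₂0 : (0:ℝ) < q₂ := lt_of_lt_of_le one_pos hq₂
  have hq0 : (0:ℝ) < q := lt_of_lt_of_le one_pos hq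
  refine ⟨4*q₁*q₂, by positivity, ?_⟩
  intro Ω _ μ _ f g hf hg
  have hD : Antitone (dd μ fun ω => f ω * g ω) := dd_anti μ _
  have hD₁ : Antitone (dd μ f) := dd_anti μ f
  have hD₂ : Antitone (dd μ g) := dd_anti μ g
  have hR₁m : Measurable (rr (dd μ f)) := (rr_anti _).measurable
  have hR₂m : Measurable (rr (dd μ g)) := (rr_anti _).measurable
  have e0 : lorentzNorm μ q α (fun ω => f ω * g ω)
      = N α (fun lam => ENNReal.ofReal lam
          * (dd μ (fun ω => f ω * g ω) lam) ^ (1/q)) := rfl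
  have e1 : lorentzNorm μ q₁ α₁ f
      = N α₁ (fun lam => ENNReal.ofReal lam * (dd μ f lam) ^ (1/q₁)) := rfl
  have e2 : lorentzNorm μ q₂ α₂ g
      = N α₂ (fun lam => ENNReal.ofReal lam * (dd μ g lam) ^ (1/q₂)) := rfl
  set F₁ : ℝ → ℝ≥0∞ := fun t => (ENNReal.ofReal t) ^ (1/q₁) * rr (dd μ f) (t/2) with hF₁def
  set F₂ : ℝ → ℝ≥0∞ := fun t => (ENNReal.ofReal t) ^ (1/q₂) * rr (dd μ g) (t/2) with hF₂def
  have hF₁m : Measurable F₁ :=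
    ((Measurable.ennreal_ofReal measurable_id').pow measurable_const).mul
      (hR₁m.comp (measurable_id'.div_const 2))
  have hF₂m : Measurable F₂ :=
    ((Measurable.ennreal_ofReal measurable_id').pow measurable_const).mul
      (hR₂m.comp (measurable_id'.div_const 2))
  have hpt : ∀ t : ℝ,
      (ENNReal.ofReal t) ^ (1/q) * rr (dd μ fun ω => f ω * g ω) t ≤ F₁ t * F₂ t := by
    intro t
    rcases le_or_gt t 0 with ht | ht
    · rw [ENNReal.ofReal_eq_zero.2 ht, ENNReal.zero_rpow_of_pos (by positivity), zero_mul]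
      exact zero_le
    · have hne0 : ENNReal.ofReal t ≠ 0 := (ENNReal.ofReal_pos.2 ht).ne'
      have hsplit : (ENNReal.ofReal t) ^ (1/q)
          = (ENNReal.ofReal t) ^ (1/q₁) * (ENNReal.ofReal t) ^ (1/q₂) := by
        rw [hqe, ENNReal.rpow_add _ _ hne0 ENNReal.ofReal_ne_top]
      calc (ENNReal.ofReal t) ^ (1/q) * rr (dd μ fun ω => f ω * g ω) t
          ≤ (ENNReal.ofReal t) ^ (1/q) * (rr (dd μ f) (t/2) * rr (dd μ g) (t/2)) :=
            mul_le_mul_right (rr_dd_mul_le μ f g ht) _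
        _ = F₁ t * F₂ t := by rw [hsplit, hF₁def, hF₂def]; ring
  have hbound : ∀ (q' : ℝ), 1 ≤ q' → ∀ (α' : ℝ≥0∞), 1 ≤ α' → ∀ (h : Ω → ℂ),
      N α' (fun t => (ENNReal.ofReal t) ^ (1/q') * rr (dd μ h) (t/2))
        ≤ ENNReal.ofReal 2 * ENNReal.ofReal q'
          * N α' (fun lam => ENNReal.ofReal lam * (dd μ h lam) ^ (1/q')) := by
    intro q' hq' α' hα' h
    have hq'0 : (0:ℝ) < q' := lt_of_lt_of_le one_pos hq'
    have hRm : Measurable (rr (dd μ h)) := (rr_anti _).measurable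
    have hGm : Measurable fun s : ℝ => (ENNReal.ofReal s) ^ (1/q') * rr (dd μ h) s :=
      ((Measurable.ennreal_ofReal measurable_id').pow measurable_const).mul hRm
    have hre : (fun t : ℝ => (ENNReal.ofReal t) ^ (1/q') * rr (dd μ h) (t/2))
        = fun t : ℝ => (ENNReal.ofReal 2) ^ (1/q')
            * ((fun s : ℝ => (ENNReal.ofReal s) ^ (1/q') * rr (dd μ h) s) (t/2)) := by
      funext t
      rcases le_or_gt t 0 with ht | ht
      · have hz1 : ENNReal.ofReal t = 0 := ENNReal.ofReal_eq_zero.2 ht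
        have hz2 : ENNReal.ofReal (t/2) = 0 := ENNReal.ofReal_eq_zero.2 (by linarith)
        simp only [hz1, hz2, ENNReal.zero_rpow_of_pos (by positivity : (0:ℝ) < 1/q'),
          zero_mul, mul_zero]
      · have h2 : ENNReal.ofReal t = ENNReal.ofReal 2 * ENNReal.ofReal (t/2) := by
          rw [← ENNReal.ofReal_mul (by norm_num)]
          ring_nf
        rw [h2, ENNReal.mul_rpow_of_nonneg _ _ (by positivity : (0:ℝ) ≤ 1/q')]
        ring
    rw [hre, N_const_mul hα'
        (ENNReal.rpow_ne_top_of_nonneg (by positivity) ENNReal.ofReal_ne_top),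
      N_scale hα' hGm]
    calc (ENNReal.ofReal 2) ^ (1/q')
          * N α' (fun s : ℝ => (ENNReal.ofReal s) ^ (1/q') * rr (dd μ h) s)
        ≤ (ENNReal.ofReal 2) ^ (1/q')
          * (ENNReal.ofReal q'
            * N α' (fun lam => ENNReal.ofReal lam * (dd μ h lam) ^ (1/q'))) :=
          mul_le_mul_right (dual_ge hq' hα' (dd_anti μ h)) _
      _ ≤ ENNReal.ofReal 2
          * (ENNReal.ofReal q'
            * N α' (fun lam => ENNReal.ofReal lam * (dd μ h lam) ^ (1/q'))) := by
          refine mul_le_mul_left ?_ _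
          calc (ENNReal.ofReal 2) ^ (1/q') ≤ (ENNReal.ofReal 2) ^ (1:ℝ) :=
              ENNReal.rpow_le_rpow_of_exponent_le (ENNReal.one_le_ofReal.2 (by norm_num))
                (by rw [div_le_one hq'0]; exact hq')
            _ = ENNReal.ofReal 2 := ENNReal.rpow_one _
      _ = ENNReal.ofReal 2 * ENNReal.ofReal q'
            * N α' (fun lam => ENNReal.ofReal lam * (dd μ h lam) ^ (1/q')) := by ring
  calc lorentzNorm μ q α (fun ω => f ω * g ω)
      ≤ N α (fun t => (ENNReal.ofReal t) ^ (1/q) * rr (dd μ fun ω => f ω * g ω) t) := by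
        rw [e0]
        exact dual_le hq hα hD
    _ ≤ N α (fun t => F₁ t * F₂ t) := N_mono hpt
    _ ≤ N α₁ F₁ * N α₂ F₂ := N_holder hα hα₁ hα₂ hαe hF₁m hF₂m
    _ ≤ (ENNReal.ofReal 2 * ENNReal.ofReal q₁
          * N α₁ (fun lam => ENNReal.ofReal lam * (dd μ f lam) ^ (1/q₁)))
        * (ENNReal.ofReal 2 * ENNReal.ofReal q₂
          * N α₂ (fun lam => ENNReal.ofReal lam * (dd μ g lam) ^ (1/q₂))) :=
        mul_le_mul' (hbound q₁ hq₁ α₁ hα₁ f) (hbound q₂ hq₂ α₂ hα₂ g)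
    _ = ENNReal.ofReal (4*q₁*q₂) * (lorentzNorm μ q₁ α₁ f * lorentzNorm μ q₂ α₂ g) := by
        rw [e1, e2]
        rw [show ENNReal.ofReal (4*q₁*q₂)
            = ENNReal.ofReal 2 * ENNReal.ofReal q₁ * (ENNReal.ofReal 2 * ENNReal.ofReal q₂)
          from by
            rw [← ENNReal.ofReal_mul (by norm_num), ← ENNReal.ofReal_mul (by norm_num),
              ← ENNReal.ofReal_mul (by positivity)]
            norm_num
            ring_nf]
        ring

end
end
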